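/- Let k be a field, A a k-algebra, V a simple A-module that is finite-dimensional over k, and e ∈ A an idempotent with dim_k(e·V) = 1. Then for every central element z ∈ Z(A), the action of z on V is multiplication by a scalar in k. -/

import Mathlib

/-- If `V` is a simple `A`-module, finite-dimensional over `k`, and `e ∈ A` is an
idempotent with `dim_k (e·V) = 1`, then every central element of `A` acts on `V`
by a scalar in `k`. -/
theorem central_element_acts_by_scalar {k A V : Type*} [Field k] [Ring A] [Algebra k A]
    [AddCommGroup V] [Module k V] [Module A V] [IsScalarTower k A V]
    [SMulCommClass A k V] [IsSimpleModule A V] [FiniteDimensional k V]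
    (e : A) (he : e * e = e)
    (hdim : Module.finrank k (LinearMap.range (DistribMulAction.toLinearMap k V e)) = 1) :
    ∀ z ∈ Subring.center A, ∃ c : k, ∀ v : V, z • v = c • v := by
  intro z hz
  have hzcomm : ∀ a : A, z * a = a * z := fun a =>
    (Subring.mem_center_iff.mp hz a).symm
  set W := LinearMap.range (DistribMulAction.toLinearMap k V e) with hW
  -- pick a nonzero spanning vector of W
  obtain ⟨w, hw0, hwall⟩ := finrank_eq_one_iff'.mp hdim
  -- z • (w : V) lies in W
  obtain ⟨u, hu⟩ := w.2
  have hzw : z • (w : V) ∈ W := by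
    refine ⟨z • u, ?_⟩
    simp only [DistribMulAction.toLinearMap, DistribSMul.toLinearMap_apply] at hu ⊢
    rw [← hu, smul_smul, smul_smul, hzcomm e]
  obtain ⟨c, hc⟩ := hwall ⟨z • (w : V), hzw⟩
  have hcw : z • (w : V) = c • (w : V) := by
    have := congrArg (Subtype.val) hc
    simpa using this.symm
  refine ⟨c, ?_⟩
  -- the eq-locus of the two A-linear maps v ↦ z•v and v ↦ c•v
  let f : V →ₗ[A] V :=
    { toFun := fun v => z • v
      map_add' := fun x y => smul_add z x y
      map_smul' := fun a v => by
        simp only [RingHom.id_apply, ← mul_smul, hzcomm a] }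
  let g : V →ₗ[A] V :=
    { toFun := fun v => c • v
      map_add' := fun x y => smul_add c x y
      map_smul' := fun a v => by
        simp only [RingHom.id_apply]; exact smul_comm c a v }
  have hne : LinearMap.eqLocus f g ≠ ⊥ := by
    intro hbot
    have hmem : (w : V) ∈ LinearMap.eqLocus f g := hcw
    rw [hbot, Submodule.mem_bot] at hmem
    exact hw0 (Subtype.ext hmem)
  have htop : LinearMap.eqLocus f g = ⊤ :=
    (eq_bot_or_eq_top _).resolve_left hne
  intro v
  have : v ∈ LinearMap.eqLocus f g := htop ▸ Submodule.mem_top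
  exact this
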